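/- arXiv:2501.12597 — 2 statements merged into one kernel-verified Lean document; each statement's English description precedes it below -/
import Mathlib

section
/- Let l, h, n be natural numbers with n ≥ 2, let H be a real l×n matrix, let W₁, W₂ be real l×h matrices, let w : Fin h → ℝ, and let τ > 0. Define the attention pre-scores ξ(H) : Fin n → ℝ by ξ(H)_j = ∑_{k} w_k · tanh((W₁ᵀ·H)_{k,j}) · sigm((W₂ᵀ·H)_{k,j}), the attention scores AS(H) = softmax(ξ(H)/τ), and the aggregated bag-level feature A(H) : Fin l → ℝ by A(H)_i = ∑_{j} H_{i,j} · Ψ(AS(H))_j. Assume the sample standard deviation s(AS(H)) is positive. Then for every permutation σ of Fin n, the margin-aware attention mechanism is permutation invariant: A(H · P_σ) = A(H). -/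
open Matrix BigOperators

/-- Permutation matrix of `σ`: `(P σ) i j = 1` if `i = σ j`, else `0`. -/
noncomputable def permMat {n : ℕ} (σ : Equiv.Perm (Fin n)) : Matrix (Fin n) (Fin n) ℝ :=
  fun i j => if i = σ j then 1 else 0

/-- Sigmoid function. -/
noncomputable def sigm (x : ℝ) : ℝ := 1 / (1 + Real.exp (-x))

/-- Attention pre-scores `ξ(H)`. -/
noncomputable def xi {l h n : ℕ} (W₁ W₂ : Matrix (Fin l) (Fin h) ℝ) (w : Fin h → ℝ)
    (H : Matrix (Fin l) (Fin n) ℝ) : Fin n → ℝ :=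
  fun j => ∑ k, w k * Real.tanh ((W₁ᵀ * H) k j) * sigm ((W₂ᵀ * H) k j)

/-- Softmax. -/
noncomputable def softmax {n : ℕ} (x : Fin n → ℝ) : Fin n → ℝ :=
  fun j => Real.exp (x j) / ∑ i, Real.exp (x i)

/-- Mean of a vector. -/
noncomputable def meanF {n : ℕ} (a : Fin n → ℝ) : ℝ := (∑ i, a i) / n

/-- Sample standard deviation. -/
noncomputable def sdev {n : ℕ} (a : Fin n → ℝ) : ℝ :=
  Real.sqrt (∑ i, (a i - meanF a) ^ 2 / ((n : ℝ) - 1))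

/-- Standardization `Ψ(a)` (division by zero yields zero). -/
noncomputable def stdize {n : ℕ} (a : Fin n → ℝ) : Fin n → ℝ :=
  fun j => (a j - meanF a) / sdev a

/-- Attention scores `AS(H) = softmax(ξ(H)/τ)`. -/
noncomputable def AS {l h n : ℕ} (W₁ W₂ : Matrix (Fin l) (Fin h) ℝ) (w : Fin h → ℝ) (τ : ℝ)
    (H : Matrix (Fin l) (Fin n) ℝ) : Fin n → ℝ :=
  softmax (fun j => xi W₁ W₂ w H j / τ)

/-- Aggregated bag-level feature `A(H) i = ∑ j, H i j * Ψ(AS(H)) j`. -/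
noncomputable def agg {l h n : ℕ} (W₁ W₂ : Matrix (Fin l) (Fin h) ℝ) (w : Fin h → ℝ) (τ : ℝ)
    (H : Matrix (Fin l) (Fin n) ℝ) : Fin l → ℝ :=
  fun i => ∑ j, H i j * stdize (AS W₁ W₂ w τ H) j

lemma mul_permMat {m n : ℕ} (M : Matrix (Fin m) (Fin n) ℝ) (σ : Equiv.Perm (Fin n)) :
    ∀ i j, (M * permMat σ) i j = M i (σ j) := by
  intro i j
  simp [Matrix.mul_apply, permMat, eq_comm]

lemma AS_perm {l h n : ℕ} (W₁ W₂ : Matrix (Fin l) (Fin h) ℝ) (w : Fin h → ℝ) (τ : ℝ)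
    (H : Matrix (Fin l) (Fin n) ℝ) (σ : Equiv.Perm (Fin n)) :
    ∀ j, AS W₁ W₂ w τ (H * permMat σ) j = AS W₁ W₂ w τ H (σ j) := by
  have hxi : ∀ j, xi W₁ W₂ w (H * permMat σ) j = xi W₁ W₂ w H (σ j) := by
    intro j
    unfold xi
    congr 1; funext k
    rw [show W₁ᵀ * (H * permMat σ) = (W₁ᵀ * H) * permMat σ by rw [Matrix.mul_assoc],
        show W₂ᵀ * (H * permMat σ) = (W₂ᵀ * H) * permMat σ by rw [Matrix.mul_assoc],
        mul_permMat, mul_permMat]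
  intro j
  unfold AS softmax
  simp only [hxi]
  rw [Equiv.sum_comp σ (fun i => Real.exp (xi W₁ W₂ w H i / τ))]

/-- The margin-aware attention mechanism is permutation invariant. -/
theorem margin_aware_attention_permutation_invariant {l h n : ℕ} (hn : 2 ≤ n)
    (H : Matrix (Fin l) (Fin n) ℝ) (W₁ W₂ : Matrix (Fin l) (Fin h) ℝ) (w : Fin h → ℝ)
    (τ : ℝ) (hτ : 0 < τ) (hs : 0 < sdev (AS W₁ W₂ w τ H)) (σ : Equiv.Perm (Fin n)) :
    agg W₁ W₂ w τ (H * permMat σ) = agg W₁ W₂ w τ H := by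
  have hAS := AS_perm W₁ W₂ w τ H σ
  have hmean : meanF (AS W₁ W₂ w τ (H * permMat σ)) = meanF (AS W₁ W₂ w τ H) := by
    unfold meanF
    simp only [hAS]
    rw [Equiv.sum_comp σ (fun i => AS W₁ W₂ w τ H i)]
  have hsd : sdev (AS W₁ W₂ w τ (H * permMat σ)) = sdev (AS W₁ W₂ w τ H) := by
    unfold sdev
    simp only [hAS, hmean]
    rw [Equiv.sum_comp σ (fun i => (AS W₁ W₂ w τ H i - meanF (AS W₁ W₂ w τ H)) ^ 2 / ((n:ℝ)-1))]
  funext i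
  unfold agg stdize
  simp only [mul_permMat, hAS, hmean, hsd]
  rw [Equiv.sum_comp σ
    (fun j => H i j * ((AS W₁ W₂ w τ H j - meanF (AS W₁ W₂ w τ H)) / sdev (AS W₁ W₂ w τ H)))]
end

section
/- Let l, h, n be natural numbers with n ≥ 1, let H be a real l×n matrix, let W₁, W₂ be real l×h matrices, let w : Fin h → ℝ, and let τ > 0. Define ξ(H) : Fin n → ℝ by ξ(H)_j = ∑_{k} w_k · tanh((W₁ᵀ·H)_{k,j}) · sigm((W₂ᵀ·H)_{k,j}) and the attention scores AS(H) = softmax(ξ(H)/τ). Then for every permutation σ of Fin n, AS(H · P_σ) = AS(H) ∘ σ. -/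
open Matrix BigOperators

/-- The attention scores are permutation equivariant: `AS(H · P_σ) = AS(H) ∘ σ`. -/
theorem AS_mul_permMat {l h n : ℕ} (hn : 1 ≤ n) (H : Matrix (Fin l) (Fin n) ℝ)
    (W₁ W₂ : Matrix (Fin l) (Fin h) ℝ) (w : Fin h → ℝ) (τ : ℝ) (hτ : 0 < τ)
    (σ : Equiv.Perm (Fin n)) :
    AS W₁ W₂ w τ (H * permMat σ) = AS W₁ W₂ w τ H ∘ σ := by
  have key : ∀ (m : ℕ) (M : Matrix (Fin m) (Fin n) ℝ) (i : Fin m) (j : Fin n),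
      (M * permMat σ) i j = M i (σ j) := by
    intro m M i j
    rw [Matrix.mul_apply]
    rw [Finset.sum_eq_single (σ j) (fun b _ hb => by simp [permMat, hb]) (by simp)]
    simp [permMat]
  have hxi : ∀ j, xi W₁ W₂ w (H * permMat σ) j = xi W₁ W₂ w H (σ j) := by
    intro j
    simp only [xi, ← Matrix.mul_assoc, key]
  have hsum : ∑ i, Real.exp (xi W₁ W₂ w (H * permMat σ) i / τ)
      = ∑ i, Real.exp (xi W₁ W₂ w H i / τ) := by
    simp only [hxi]
    exact Equiv.sum_comp σ (fun i => Real.exp (xi W₁ W₂ w H i / τ))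
  funext j
  simp only [AS, softmax, Function.comp_apply, hxi, hsum]
  rw [Equiv.sum_comp σ (fun i => Real.exp (xi W₁ W₂ w H i / τ))]
end
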